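/- If A is a 4×4 complex Hadamard matrix in dephased form and some entry of A is not a real number, then the trace of A is not a real number. -/

import Mathlib

open Matrix Polynomial Complex
open ComplexConjugate

/-- A 4×4 complex Hadamard matrix: unitary with all entries of absolute value `1/√4`. -/
def IsHadamard (H : Matrix (Fin 4) (Fin 4) ℂ) : Prop :=
  H * Hᴴ = 1 ∧ Hᴴ * H = 1 ∧ ∀ i j, ‖H i j‖ = 1 / Real.sqrt 4

/-- Dephased form: all entries of the 0th row and 0th column equal `1/√4`. -/
def IsDephased (H : Matrix (Fin 4) (Fin 4) ℂ) : Prop :=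
  (∀ j, H 0 j = ((1 / Real.sqrt 4 : ℝ) : ℂ)) ∧ (∀ i, H i 0 = ((1 / Real.sqrt 4 : ℝ) : ℂ))

theorem core (a b c d e f g k m : ℂ)
    (ua : a * conj a = 1) (ub : b * conj b = 1) (uc : c * conj c = 1)
    (ud : d * conj d = 1) (ue : e * conj e = 1) (uf : f * conj f = 1)
    (ug : g * conj g = 1) (uk : k * conj k = 1) (um : m * conj m = 1)
    (r1 : a + b + c = -1) (r2 : d + e + f = -1) (r3 : g + k + m = -1)
    (c1 : a + d + g = -1) (c2 : b + e + k = -1) (c3 : c + f + m = -1)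
    (o12 : a * conj d + b * conj e + c * conj f = -1)
    (o13 : a * conj g + b * conj k + c * conj m = -1)
    (o23 : d * conj g + e * conj k + f * conj m = -1)
    (ht : (a + e + m).im = 0) :
    a.im = 0 ∧ b.im = 0 ∧ c.im = 0 ∧ d.im = 0 ∧ e.im = 0 ∧ f.im = 0 ∧
      g.im = 0 ∧ k.im = 0 ∧ m.im = 0 := by
  have crr1 : conj a + conj b + conj c = -1 := by
    have := congrArg (starRingEnd ℂ) r1
    simpa [map_add, map_neg, _root_.map_one] using this
  have hsymr1 : a*b + a*c + b*c = -(a*b*c) := by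
    linear_combination (a*b*c) * crr1 - b*c * ua - a*c * ub - a*b * uc
  have hpr1 : (1 + a) * ((1 + b) * (1 + c)) = 0 := by linear_combination r1 + hsymr1
  have crr2 : conj d + conj e + conj f = -1 := by
    have := congrArg (starRingEnd ℂ) r2
    simpa [map_add, map_neg, _root_.map_one] using this
  have hsymr2 : d*e + d*f + e*f = -(d*e*f) := by
    linear_combination (d*e*f) * crr2 - e*f * ud - d*f * ue - d*e * uf
  have hpr2 : (1 + d) * ((1 + e) * (1 + f)) = 0 := by linear_combination r2 + hsymr2
  have crr3 : conj g + conj k + conj m = -1 := by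
    have := congrArg (starRingEnd ℂ) r3
    simpa [map_add, map_neg, _root_.map_one] using this
  have hsymr3 : g*k + g*m + k*m = -(g*k*m) := by
    linear_combination (g*k*m) * crr3 - k*m * ug - g*m * uk - g*k * um
  have hpr3 : (1 + g) * ((1 + k) * (1 + m)) = 0 := by linear_combination r3 + hsymr3
  rcases mul_eq_zero.mp hpr1 with hA0 | hBC0
  · 
    have haE : a = -1 := by linear_combination hA0
    have hcE : c = -b := by linear_combination r1 - hA0
    subst haE; subst hcE
    rcases mul_eq_zero.mp hpr2 with hA1 | hBC1
    · 
      have hdE : d = -1 := by linear_combination hA1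
      have hfE : f = -e := by linear_combination r2 - hA1
      subst hdE; subst hfE
      rcases mul_eq_zero.mp hpr3 with hA2 | hBC2
      · 
        have hgE : g = -1 := by linear_combination hA2
        have hmE : m = -k := by linear_combination r3 - hA2
        subst hgE; subst hmE
        exfalso
        have hbad : (1 : ℂ) = 0 := by linear_combination ((-1 : ℂ)/2) * c1
        exact one_ne_zero hbad
      · rcases mul_eq_zero.mp hBC2 with hB2 | hC2
        · 
          have hkE : k = -1 := by linear_combination hB2
          have hmE : m = -g := by linear_combination r3 - hB2
          subst hkE; subst hmE
          have hsb : b = -e := by linear_combination c2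
          have hsg : g = (1 : ℂ) := by linear_combination c1
          subst hsb
          subst hsg
          have hfree : e.im = 0 := by
            simp only [Complex.add_im, Complex.neg_im, Complex.one_im, neg_zero, add_zero, zero_add, neg_neg, neg_add_rev] at ht
            linarith
          refine ⟨?_, ?_, ?_, ?_, ?_, ?_, ?_, ?_, ?_⟩ <;> simp [Complex.neg_im, Complex.one_im, hfree]
        · 
          have hmE : m = -1 := by linear_combination hC2
          have hkE : k = -g := by linear_combination r3 - hC2
          subst hmE; subst hkE
          have hsb : b = -e := by linear_combination c1 + c2
          have hsg : g = (1 : ℂ) := by linear_combination c1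
          subst hsb
          subst hsg
          have hfree : e.im = 0 := by
            simp only [Complex.add_im, Complex.neg_im, Complex.one_im, neg_zero, add_zero, zero_add, neg_neg, neg_add_rev] at ht
            linarith
          refine ⟨?_, ?_, ?_, ?_, ?_, ?_, ?_, ?_, ?_⟩ <;> simp [Complex.neg_im, Complex.one_im, hfree]
    · rcases mul_eq_zero.mp hBC1 with hB1 | hC1
      · 
        have heE : e = -1 := by linear_combination hB1
        have hfE : f = -d := by linear_combination r2 - hB1
        subst heE; subst hfE
        rcases mul_eq_zero.mp hpr3 with hA2 | hBC2
        · 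
          have hgE : g = -1 := by linear_combination hA2
          have hmE : m = -k := by linear_combination r3 - hA2
          subst hgE; subst hmE
          have hsb : b = -k := by linear_combination c2
          have hsd : d = (1 : ℂ) := by linear_combination c1
          subst hsb
          subst hsd
          have hfree : k.im = 0 := by
            simp only [Complex.add_im, Complex.neg_im, Complex.one_im, neg_zero, add_zero, zero_add, neg_neg, neg_add_rev] at ht
            linarith
          refine ⟨?_, ?_, ?_, ?_, ?_, ?_, ?_, ?_, ?_⟩ <;> simp [Complex.neg_im, Complex.one_im, hfree]
        · rcases mul_eq_zero.mp hBC2 with hB2 | hC2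
          · 
            have hkE : k = -1 := by linear_combination hB2
            have hmE : m = -g := by linear_combination r3 - hB2
            subst hkE; subst hmE
            have hsb : b = (1 : ℂ) := by linear_combination c2
            have hsd : d = -g := by linear_combination c1
            subst hsb
            subst hsd
            have hfree : g.im = 0 := by
              simp only [Complex.add_im, Complex.neg_im, Complex.one_im, neg_zero, add_zero, zero_add, neg_neg, neg_add_rev] at ht
              linarith
            refine ⟨?_, ?_, ?_, ?_, ?_, ?_, ?_, ?_, ?_⟩ <;> simp [Complex.neg_im, Complex.one_im, hfree]
          · 
            have hmE : m = -1 := by linear_combination hC2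
            have hkE : k = -g := by linear_combination r3 - hC2
            subst hmE; subst hkE
            have hsb : b = g := by linear_combination c2
            have hsd : d = -g := by linear_combination c1
            subst hsb
            subst hsd
            simp only [map_neg, _root_.map_one] at o12
            have hcj : (starRingEnd ℂ) b = b := by linear_combination o12 + ub
            have hfree : b.im = 0 := Complex.conj_eq_iff_im.mp hcj
            refine ⟨?_, ?_, ?_, ?_, ?_, ?_, ?_, ?_, ?_⟩ <;> simp [Complex.neg_im, Complex.one_im, hfree]
      · 
        have hfE : f = -1 := by linear_combination hC1
        have heE : e = -d := by linear_combination r2 - hC1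
        subst hfE; subst heE
        rcases mul_eq_zero.mp hpr3 with hA2 | hBC2
        · 
          have hgE : g = -1 := by linear_combination hA2
          have hmE : m = -k := by linear_combination r3 - hA2
          subst hgE; subst hmE
          have hsb : b = -k := by linear_combination c1 + c2
          have hsd : d = (1 : ℂ) := by linear_combination c1
          subst hsb
          subst hsd
          have hfree : k.im = 0 := by
            simp only [Complex.add_im, Complex.neg_im, Complex.one_im, neg_zero, add_zero, zero_add, neg_neg, neg_add_rev] at ht
            linarith
          refine ⟨?_, ?_, ?_, ?_, ?_, ?_, ?_, ?_, ?_⟩ <;> simp [Complex.neg_im, Complex.one_im, hfree]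
        · rcases mul_eq_zero.mp hBC2 with hB2 | hC2
          · 
            have hkE : k = -1 := by linear_combination hB2
            have hmE : m = -g := by linear_combination r3 - hB2
            subst hkE; subst hmE
            have hsb : b = -g := by linear_combination c1 + c2
            have hsd : d = -g := by linear_combination c1
            subst hsb
            subst hsd
            simp only [map_neg, _root_.map_one] at o12
            have hcj : (starRingEnd ℂ) g = g := by linear_combination o12 + ug
            have hfree : g.im = 0 := Complex.conj_eq_iff_im.mp hcj
            refine ⟨?_, ?_, ?_, ?_, ?_, ?_, ?_, ?_, ?_⟩ <;> simp [Complex.neg_im, Complex.one_im, hfree]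
          · 
            have hmE : m = -1 := by linear_combination hC2
            have hkE : k = -g := by linear_combination r3 - hC2
            subst hmE; subst hkE
            have hsb : b = (-1 : ℂ) := by linear_combination c1 + c2
            have hsd : d = -g := by linear_combination c1
            subst hsb
            subst hsd
            have hfree : g.im = 0 := by
              simp only [Complex.add_im, Complex.neg_im, Complex.one_im, neg_zero, add_zero, zero_add, neg_neg, neg_add_rev] at ht
              linarith
            refine ⟨?_, ?_, ?_, ?_, ?_, ?_, ?_, ?_, ?_⟩ <;> simp [Complex.neg_im, Complex.one_im, hfree]
  · rcases mul_eq_zero.mp hBC0 with hB0 | hC0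
    · 
      have hbE : b = -1 := by linear_combination hB0
      have hcE : c = -a := by linear_combination r1 - hB0
      subst hbE; subst hcE
      rcases mul_eq_zero.mp hpr2 with hA1 | hBC1
      · 
        have hdE : d = -1 := by linear_combination hA1
        have hfE : f = -e := by linear_combination r2 - hA1
        subst hdE; subst hfE
        rcases mul_eq_zero.mp hpr3 with hA2 | hBC2
        · 
          have hgE : g = -1 := by linear_combination hA2
          have hmE : m = -k := by linear_combination r3 - hA2
          subst hgE; subst hmE
          have hsa : a = (1 : ℂ) := by linear_combination c1
          have hse : e = -k := by linear_combination c2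
          subst hsa
          subst hse
          have hfree : k.im = 0 := by
            simp only [Complex.add_im, Complex.neg_im, Complex.one_im, neg_zero, add_zero, zero_add, neg_neg, neg_add_rev] at ht
            linarith
          refine ⟨?_, ?_, ?_, ?_, ?_, ?_, ?_, ?_, ?_⟩ <;> simp [Complex.neg_im, Complex.one_im, hfree]
        · rcases mul_eq_zero.mp hBC2 with hB2 | hC2
          · 
            have hkE : k = -1 := by linear_combination hB2
            have hmE : m = -g := by linear_combination r3 - hB2
            subst hkE; subst hmE
            have hsa : a = -g := by linear_combination c1
            have hse : e = (1 : ℂ) := by linear_combination c2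
            subst hsa
            subst hse
            have hfree : g.im = 0 := by
              simp only [Complex.add_im, Complex.neg_im, Complex.one_im, neg_zero, add_zero, zero_add, neg_neg, neg_add_rev] at ht
              linarith
            refine ⟨?_, ?_, ?_, ?_, ?_, ?_, ?_, ?_, ?_⟩ <;> simp [Complex.neg_im, Complex.one_im, hfree]
          · 
            have hmE : m = -1 := by linear_combination hC2
            have hkE : k = -g := by linear_combination r3 - hC2
            subst hmE; subst hkE
            have hsa : a = -g := by linear_combination c1
            have hse : e = g := by linear_combination c2
            subst hsa
            subst hse
            simp only [map_neg, _root_.map_one] at o12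
            have hcj : (starRingEnd ℂ) e = e := by linear_combination (-1 : ℂ) * o12 + (-1 : ℂ) * ue
            have hfree : e.im = 0 := Complex.conj_eq_iff_im.mp hcj
            refine ⟨?_, ?_, ?_, ?_, ?_, ?_, ?_, ?_, ?_⟩ <;> simp [Complex.neg_im, Complex.one_im, hfree]
      · rcases mul_eq_zero.mp hBC1 with hB1 | hC1
        · 
          have heE : e = -1 := by linear_combination hB1
          have hfE : f = -d := by linear_combination r2 - hB1
          subst heE; subst hfE
          rcases mul_eq_zero.mp hpr3 with hA2 | hBC2
          · 
            have hgE : g = -1 := by linear_combination hA2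
            have hmE : m = -k := by linear_combination r3 - hA2
            subst hgE; subst hmE
            have hsa : a = -d := by linear_combination c1
            have hsk : k = (1 : ℂ) := by linear_combination c2
            subst hsa
            subst hsk
            have hfree : d.im = 0 := by
              simp only [Complex.add_im, Complex.neg_im, Complex.one_im, neg_zero, add_zero, zero_add, neg_neg, neg_add_rev] at ht
              linarith
            refine ⟨?_, ?_, ?_, ?_, ?_, ?_, ?_, ?_, ?_⟩ <;> simp [Complex.neg_im, Complex.one_im, hfree]
          · rcases mul_eq_zero.mp hBC2 with hB2 | hC2
            · 
              have hkE : k = -1 := by linear_combination hB2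
              have hmE : m = -g := by linear_combination r3 - hB2
              subst hkE; subst hmE
              exfalso
              have hbad : (1 : ℂ) = 0 := by linear_combination ((-1 : ℂ)/2) * c2
              exact one_ne_zero hbad
            · 
              have hmE : m = -1 := by linear_combination hC2
              have hkE : k = -g := by linear_combination r3 - hC2
              subst hmE; subst hkE
              have hsa : a = -d := by linear_combination c1 + c2
              have hsg : g = (-1 : ℂ) := by linear_combination (-1 : ℂ) * c2
              subst hsa
              subst hsg
              have hfree : d.im = 0 := by
                simp only [Complex.add_im, Complex.neg_im, Complex.one_im, neg_zero, add_zero, zero_add, neg_neg, neg_add_rev] at ht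
                linarith
              refine ⟨?_, ?_, ?_, ?_, ?_, ?_, ?_, ?_, ?_⟩ <;> simp [Complex.neg_im, Complex.one_im, hfree]
        · 
          have hfE : f = -1 := by linear_combination hC1
          have heE : e = -d := by linear_combination r2 - hC1
          subst hfE; subst heE
          rcases mul_eq_zero.mp hpr3 with hA2 | hBC2
          · 
            have hgE : g = -1 := by linear_combination hA2
            have hmE : m = -k := by linear_combination r3 - hA2
            subst hgE; subst hmE
            have hsa : a = -k := by linear_combination c1 + c2
            have hsd : d = k := by linear_combination (-1 : ℂ) * c2
            subst hsa
            subst hsd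
            have hfree : d.im = 0 := by
              simp only [Complex.add_im, Complex.neg_im, Complex.one_im, neg_zero, add_zero, zero_add, neg_neg, neg_add_rev] at ht
              linarith
            refine ⟨?_, ?_, ?_, ?_, ?_, ?_, ?_, ?_, ?_⟩ <;> simp [Complex.neg_im, Complex.one_im, hfree]
          · rcases mul_eq_zero.mp hBC2 with hB2 | hC2
            · 
              have hkE : k = -1 := by linear_combination hB2
              have hmE : m = -g := by linear_combination r3 - hB2
              subst hkE; subst hmE
              have hsa : a = -g := by linear_combination c1 + c2
              have hsd : d = (-1 : ℂ) := by linear_combination (-1 : ℂ) * c2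
              subst hsa
              subst hsd
              have hfree : g.im = 0 := by
                simp only [Complex.add_im, Complex.neg_im, Complex.one_im, neg_zero, add_zero, zero_add, neg_neg, neg_add_rev] at ht
                linarith
              refine ⟨?_, ?_, ?_, ?_, ?_, ?_, ?_, ?_, ?_⟩ <;> simp [Complex.neg_im, Complex.one_im, hfree]
            · 
              have hmE : m = -1 := by linear_combination hC2
              have hkE : k = -g := by linear_combination r3 - hC2
              subst hmE; subst hkE
              have hsa : a = (-1 : ℂ) := by linear_combination c1 + c2
              have hsd : d = -g := by linear_combination (-1 : ℂ) * c2
              subst hsa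
              subst hsd
              have hfree : g.im = 0 := by
                simp only [Complex.add_im, Complex.neg_im, Complex.one_im, neg_zero, add_zero, zero_add, neg_neg, neg_add_rev] at ht
                linarith
              refine ⟨?_, ?_, ?_, ?_, ?_, ?_, ?_, ?_, ?_⟩ <;> simp [Complex.neg_im, Complex.one_im, hfree]
    · 
      have hcE : c = -1 := by linear_combination hC0
      have hbE : b = -a := by linear_combination r1 - hC0
      subst hcE; subst hbE
      rcases mul_eq_zero.mp hpr2 with hA1 | hBC1
      · 
        have hdE : d = -1 := by linear_combination hA1
        have hfE : f = -e := by linear_combination r2 - hA1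
        subst hdE; subst hfE
        rcases mul_eq_zero.mp hpr3 with hA2 | hBC2
        · 
          have hgE : g = -1 := by linear_combination hA2
          have hmE : m = -k := by linear_combination r3 - hA2
          subst hgE; subst hmE
          have hsa : a = (1 : ℂ) := by linear_combination c1
          have hse : e = -k := by linear_combination c1 + c2
          subst hsa
          subst hse
          have hfree : k.im = 0 := by
            simp only [Complex.add_im, Complex.neg_im, Complex.one_im, neg_zero, add_zero, zero_add, neg_neg, neg_add_rev] at ht
            linarith
          refine ⟨?_, ?_, ?_, ?_, ?_, ?_, ?_, ?_, ?_⟩ <;> simp [Complex.neg_im, Complex.one_im, hfree]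
        · rcases mul_eq_zero.mp hBC2 with hB2 | hC2
          · 
            have hkE : k = -1 := by linear_combination hB2
            have hmE : m = -g := by linear_combination r3 - hB2
            subst hkE; subst hmE
            have hsa : a = -g := by linear_combination c1
            have hse : e = -g := by linear_combination c1 + c2
            subst hsa
            subst hse
            have hfree : g.im = 0 := by
              simp only [Complex.add_im, Complex.neg_im, Complex.one_im, neg_zero, add_zero, zero_add, neg_neg, neg_add_rev] at ht
              linarith
            refine ⟨?_, ?_, ?_, ?_, ?_, ?_, ?_, ?_, ?_⟩ <;> simp [Complex.neg_im, Complex.one_im, hfree]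
          · 
            have hmE : m = -1 := by linear_combination hC2
            have hkE : k = -g := by linear_combination r3 - hC2
            subst hmE; subst hkE
            have hsa : a = -g := by linear_combination c1
            have hse : e = (-1 : ℂ) := by linear_combination c1 + c2
            subst hsa
            subst hse
            have hfree : g.im = 0 := by
              simp only [Complex.add_im, Complex.neg_im, Complex.one_im, neg_zero, add_zero, zero_add, neg_neg, neg_add_rev] at ht
              linarith
            refine ⟨?_, ?_, ?_, ?_, ?_, ?_, ?_, ?_, ?_⟩ <;> simp [Complex.neg_im, Complex.one_im, hfree]
      · rcases mul_eq_zero.mp hBC1 with hB1 | hC1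
        · 
          have heE : e = -1 := by linear_combination hB1
          have hfE : f = -d := by linear_combination r2 - hB1
          subst heE; subst hfE
          rcases mul_eq_zero.mp hpr3 with hA2 | hBC2
          · 
            have hgE : g = -1 := by linear_combination hA2
            have hmE : m = -k := by linear_combination r3 - hA2
            subst hgE; subst hmE
            have hsa : a = k := by linear_combination (-1 : ℂ) * c2
            have hsd : d = -k := by linear_combination c1 + c2
            subst hsa
            subst hsd
            simp only [map_neg, _root_.map_one] at o12
            have hcj : (starRingEnd ℂ) a = a := by linear_combination (-1 : ℂ) * o12 + (-1 : ℂ) * ua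
            have hfree : a.im = 0 := Complex.conj_eq_iff_im.mp hcj
            refine ⟨?_, ?_, ?_, ?_, ?_, ?_, ?_, ?_, ?_⟩ <;> simp [Complex.neg_im, Complex.one_im, hfree]
          · rcases mul_eq_zero.mp hBC2 with hB2 | hC2
            · 
              have hkE : k = -1 := by linear_combination hB2
              have hmE : m = -g := by linear_combination r3 - hB2
              subst hkE; subst hmE
              have hsa : a = (-1 : ℂ) := by linear_combination (-1 : ℂ) * c2
              have hsd : d = -g := by linear_combination c1 + c2
              subst hsa
              subst hsd
              have hfree : g.im = 0 := by
                simp only [Complex.add_im, Complex.neg_im, Complex.one_im, neg_zero, add_zero, zero_add, neg_neg, neg_add_rev] at ht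
                linarith
              refine ⟨?_, ?_, ?_, ?_, ?_, ?_, ?_, ?_, ?_⟩ <;> simp [Complex.neg_im, Complex.one_im, hfree]
            · 
              have hmE : m = -1 := by linear_combination hC2
              have hkE : k = -g := by linear_combination r3 - hC2
              subst hmE; subst hkE
              have hsa : a = -g := by linear_combination (-1 : ℂ) * c2
              have hsd : d = (-1 : ℂ) := by linear_combination c1 + c2
              subst hsa
              subst hsd
              have hfree : g.im = 0 := by
                simp only [Complex.add_im, Complex.neg_im, Complex.one_im, neg_zero, add_zero, zero_add, neg_neg, neg_add_rev] at ht
                linarith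
              refine ⟨?_, ?_, ?_, ?_, ?_, ?_, ?_, ?_, ?_⟩ <;> simp [Complex.neg_im, Complex.one_im, hfree]
        · 
          have hfE : f = -1 := by linear_combination hC1
          have heE : e = -d := by linear_combination r2 - hC1
          subst hfE; subst heE
          rcases mul_eq_zero.mp hpr3 with hA2 | hBC2
          · 
            have hgE : g = -1 := by linear_combination hA2
            have hmE : m = -k := by linear_combination r3 - hA2
            subst hgE; subst hmE
            have hsa : a = -d := by linear_combination c1
            have hsk : k = (-1 : ℂ) := by linear_combination c1 + c2
            subst hsa
            subst hsk
            have hfree : d.im = 0 := by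
              simp only [Complex.add_im, Complex.neg_im, Complex.one_im, neg_zero, add_zero, zero_add, neg_neg, neg_add_rev] at ht
              linarith
            refine ⟨?_, ?_, ?_, ?_, ?_, ?_, ?_, ?_, ?_⟩ <;> simp [Complex.neg_im, Complex.one_im, hfree]
          · rcases mul_eq_zero.mp hBC2 with hB2 | hC2
            · 
              have hkE : k = -1 := by linear_combination hB2
              have hmE : m = -g := by linear_combination r3 - hB2
              subst hkE; subst hmE
              have hsa : a = -d := by linear_combination (-1 : ℂ) * c2
              have hsg : g = (-1 : ℂ) := by linear_combination c1 + c2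
              subst hsa
              subst hsg
              have hfree : d.im = 0 := by
                simp only [Complex.add_im, Complex.neg_im, Complex.one_im, neg_zero, add_zero, zero_add, neg_neg, neg_add_rev] at ht
                linarith
              refine ⟨?_, ?_, ?_, ?_, ?_, ?_, ?_, ?_, ?_⟩ <;> simp [Complex.neg_im, Complex.one_im, hfree]
            · 
              have hmE : m = -1 := by linear_combination hC2
              have hkE : k = -g := by linear_combination r3 - hC2
              subst hmE; subst hkE
              exfalso
              have hbad : (1 : ℂ) = 0 := by linear_combination ((1 : ℂ)/2) * c1 + ((1 : ℂ)/2) * c2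
              exact one_ne_zero hbad

private lemma half_im (z : ℂ) (h : (2 * z).im = 0) : z.im = 0 := by
  have h2 : (2 * z).im = 2 * z.im := by simp [Complex.mul_im]
  rw [h2] at h; linarith

theorem nonreal_entry_implies_nonreal_trace
    (A : Matrix (Fin 4) (Fin 4) ℂ)
    (hA : _root_.IsHadamard A) (hA' : IsDephased A)
    (h : ∃ i j, (A i j).im ≠ 0) :
    (A.trace).im ≠ 0 := by
  obtain ⟨hU, hV, habs⟩ := hA
  obtain ⟨hrow, hcol⟩ := hA'
  have hs4 : Real.sqrt 4 = 2 := by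
    rw [show (4:ℝ) = 2^2 by norm_num, Real.sqrt_sq (by norm_num : (0:ℝ) ≤ 2)]
  have hhalf : ∀ j, A 0 j = (1/2 : ℂ) := by
    intro j; rw [hrow j, hs4]; norm_num
  have hhalf' : ∀ i, A i 0 = (1/2 : ℂ) := by
    intro i; rw [hcol i, hs4]; norm_num
  have hunit : ∀ i j, A i j * conj (A i j) = 1/4 := by
    intro i j
    rw [Complex.mul_conj, Complex.normSq_eq_norm_sq, habs, hs4]
    norm_num
  have hUe : ∀ p q, A p 0 * conj (A q 0) + A p 1 * conj (A q 1) + A p 2 * conj (A q 2)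
      + A p 3 * conj (A q 3) = if p = q then 1 else 0 := by
    intro p q
    have := (Matrix.ext_iff.2 hU) p q
    simpa [Matrix.mul_apply, Matrix.conjTranspose_apply, Matrix.one_apply, Fin.sum_univ_four,
      add_assoc] using this
  have hVe : ∀ p q, conj (A 0 p) * A 0 q + conj (A 1 p) * A 1 q + conj (A 2 p) * A 2 q
      + conj (A 3 p) * A 3 q = if p = q then 1 else 0 := by
    intro p q
    have := (Matrix.ext_iff.2 hV) p q
    simpa [Matrix.mul_apply, Matrix.conjTranspose_apply, Matrix.one_apply, Fin.sum_univ_four,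
      add_assoc] using this
  intro htr
  have hcj12 : conj ((1:ℂ)/2) = (1:ℂ)/2 := by
    rw [show ((1:ℂ)/2) = ((1/2 : ℝ) : ℂ) by norm_num, Complex.conj_ofReal]
  -- row sums
  have hr : ∀ p : Fin 4, p ≠ 0 →
      2 * A p 1 + 2 * A p 2 + 2 * A p 3 = -1 := by
    intro p hp
    have e := hUe p 0
    rw [if_neg hp, hhalf 0, hhalf 1, hhalf 2, hhalf 3, hhalf' p, hcj12] at e
    linear_combination 4 * e
  -- col sums
  have hc : ∀ q : Fin 4, q ≠ 0 →
      2 * A 1 q + 2 * A 2 q + 2 * A 3 q = -1 := by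
    intro q hq
    have e := hVe 0 q
    rw [if_neg (Ne.symm hq), hhalf 0, hhalf q, hhalf' 1, hhalf' 2, hhalf' 3, hcj12] at e
    linear_combination 4 * e
  -- row orthogonality
  have ho : ∀ p p' : Fin 4, p ≠ p' →
      (2 * A p 1) * conj (2 * A p' 1) + (2 * A p 2) * conj (2 * A p' 2)
        + (2 * A p 3) * conj (2 * A p' 3) = -1 := by
    intro p p' hp
    have e := hUe p p'
    rw [if_neg hp, hhalf' p, hhalf' p', hcj12] at e
    simp only [_root_.map_mul, map_ofNat]
    linear_combination 4 * e
  have hu : ∀ p q, (2 * A p q) * conj (2 * A p q) = 1 := by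
    intro p q
    simp only [_root_.map_mul, map_ofNat]
    linear_combination 4 * hunit p q
  have ht : ((2 * A 1 1) + (2 * A 2 2) + (2 * A 3 3)).im = 0 := by
    have htr' : (A 0 0 + A 1 1 + A 2 2 + A 3 3).im = 0 := by
      have : A.trace = A 0 0 + A 1 1 + A 2 2 + A 3 3 := by
        simp [Matrix.trace, Matrix.diag, Fin.sum_univ_four]
      rw [this] at htr; exact htr
    rw [hhalf 0] at htr'
    have e2 : ((2:ℂ) * A 1 1 + 2 * A 2 2 + 2 * A 3 3)
        = 2 * ((1:ℂ)/2 + A 1 1 + A 2 2 + A 3 3) - 1 := by ring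
    rw [e2]
    simp [Complex.sub_im, Complex.mul_im]
    simpa [Complex.add_im] using htr'
  obtain ⟨i1, i2, i3, i4, i5, i6, i7, i8, i9⟩ :=
    core (2 * A 1 1) (2 * A 1 2) (2 * A 1 3) (2 * A 2 1) (2 * A 2 2) (2 * A 2 3)
      (2 * A 3 1) (2 * A 3 2) (2 * A 3 3)
      (hu 1 1) (hu 1 2) (hu 1 3) (hu 2 1) (hu 2 2) (hu 2 3) (hu 3 1) (hu 3 2) (hu 3 3)
      (hr 1 (by decide)) (hr 2 (by decide)) (hr 3 (by decide))
      (hc 1 (by decide)) (hc 2 (by decide)) (hc 3 (by decide))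
      (ho 1 2 (by decide)) (ho 1 3 (by decide)) (ho 2 3 (by decide))
      ht
  have hz : ∀ j, (A 0 j).im = 0 := by intro j; rw [hhalf j]; norm_num
  have hz' : ∀ i', (A i' 0).im = 0 := by intro i'; rw [hhalf' i']; norm_num
  obtain ⟨p, q, hpq⟩ := h
  apply hpq
  fin_cases p <;> fin_cases q <;>
    first
      | exact hz _ | exact hz' _
      | exact half_im _ i1 | exact half_im _ i2 | exact half_im _ i3
      | exact half_im _ i4 | exact half_im _ i5 | exact half_im _ i6
      | exact half_im _ i7 | exact half_im _ i8 | exact half_im _ i9
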